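/- The biclique cover number of the complete graph K_n equals ⌈log₂ n⌉. -/

import Mathlib

/-- `C` is a biclique cover of `G`: a collection of complete bipartite graphs
(each given by two disjoint vertex classes) whose edge sets union to `E(G)`. -/
def IsBicliqueCover {V : Type*} (G : SimpleGraph V) (C : Finset (Finset V × Finset V)) : Prop :=
  (∀ p ∈ C, Disjoint p.1 p.2) ∧
  ∀ x y, G.Adj x y ↔ ∃ p ∈ C, (x ∈ p.1 ∧ y ∈ p.2) ∨ (x ∈ p.2 ∧ y ∈ p.1)

/-- The biclique cover number of `G`. -/
noncomputable def bcNum {V : Type*} (G : SimpleGraph V) : ℕ :=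
  sInf {k | ∃ C, IsBicliqueCover G C ∧ C.card = k}

/-- Lower bound: any biclique cover of `K_n` has at least `log₂ n` bicliques. -/
lemma lb_aux {n : ℕ} (C : Finset (Finset (Fin n) × Finset (Fin n)))
    (h : IsBicliqueCover (⊤ : SimpleGraph (Fin n)) C) : n ≤ 2 ^ C.card := by
  classical
  set f : Fin n → Finset (Finset (Fin n) × Finset (Fin n)) :=
    fun v => C.filter (fun p => v ∈ p.1) with hf
  have hinj : Set.InjOn f (Finset.univ : Finset (Fin n)) := by
    intro x _ y _ hxy
    by_contra hne
    have hadj : (⊤ : SimpleGraph (Fin n)).Adj x y := by simpa using hne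
    obtain ⟨p, hpC, hcase⟩ := (h.2 x y).mp hadj
    have hdisj := h.1 p hpC
    rcases hcase with ⟨hx1, hy2⟩ | ⟨hx2, hy1⟩
    · have hpx : p ∈ f x := Finset.mem_filter.mpr ⟨hpC, hx1⟩
      have hpy : p ∈ f y := hxy ▸ hpx
      have hy1 : y ∈ p.1 := (Finset.mem_filter.mp hpy).2
      exact (Finset.disjoint_left.mp hdisj hy1) hy2
    · have hpy : p ∈ f y := Finset.mem_filter.mpr ⟨hpC, hy1⟩
      have hpx : p ∈ f x := hxy ▸ hpy
      have hx1 : x ∈ p.1 := (Finset.mem_filter.mp hpx).2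
      exact (Finset.disjoint_left.mp hdisj hx1) hx2
  have hmaps : ∀ v ∈ (Finset.univ : Finset (Fin n)), f v ∈ C.powerset := by
    intro v _
    exact Finset.mem_powerset.mpr (Finset.filter_subset _ _)
  have := Finset.card_le_card_of_injOn f hmaps hinj
  simpa [Finset.card_powerset] using this

/-- The biclique cover number of the complete graph `K_n` is `⌈log₂ n⌉`. -/
theorem stmt2 {n : ℕ} (hn : 1 ≤ n) :
    bcNum (⊤ : SimpleGraph (Fin n)) = Nat.clog 2 n := by
  classical
  set k := Nat.clog 2 n with hk
  have hpow : n ≤ 2 ^ k := Nat.le_pow_clog (by norm_num) n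
  -- construction
  set C : Finset (Finset (Fin n) × Finset (Fin n)) :=
    Finset.image (fun i : Fin k =>
      ((Finset.univ.filter (fun v : Fin n => Nat.testBit v i = false)),
       (Finset.univ.filter (fun v : Fin n => Nat.testBit v i = true)))) Finset.univ with hC
  have hcover : IsBicliqueCover (⊤ : SimpleGraph (Fin n)) C := by
    constructor
    · intro p hp
      obtain ⟨i, _, rfl⟩ := Finset.mem_image.mp hp
      rw [Finset.disjoint_left]
      intro v hv1 hv2
      have h1 := (Finset.mem_filter.mp hv1).2
      have h2 := (Finset.mem_filter.mp hv2).2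
      rw [h1] at h2; exact Bool.false_ne_true h2
    · intro x y
      simp only [SimpleGraph.top_adj]
      constructor
      · intro hne
        have hx : (x : ℕ) < 2 ^ k := lt_of_lt_of_le x.isLt hpow
        have hy : (y : ℕ) < 2 ^ k := lt_of_lt_of_le y.isLt hpow
        have hnexy : (x : ℕ) ≠ (y : ℕ) := fun h => hne (Fin.ext h)
        have : ∃ i : Fin k, Nat.testBit x i ≠ Nat.testBit y i := by
          by_contra hall
          push_neg at hall
          apply hnexy
          apply Nat.eq_of_testBit_eq
          intro i
          by_cases hi : i < k
          · exact hall ⟨i, hi⟩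
          · rw [Nat.testBit_eq_false_of_lt (lt_of_lt_of_le hx (Nat.pow_le_pow_right (by norm_num) (le_of_not_gt hi))),
              Nat.testBit_eq_false_of_lt (lt_of_lt_of_le hy (Nat.pow_le_pow_right (by norm_num) (le_of_not_gt hi)))]
        obtain ⟨i, hbit⟩ := this
        refine ⟨_, Finset.mem_image.mpr ⟨i, Finset.mem_univ i, rfl⟩, ?_⟩
        cases hxb : Nat.testBit x i
        · left
          refine ⟨Finset.mem_filter.mpr ⟨Finset.mem_univ _, hxb⟩,
            Finset.mem_filter.mpr ⟨Finset.mem_univ _, ?_⟩⟩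
          rw [hxb] at hbit
          exact eq_true_of_ne_false fun h => hbit h.symm
        · right
          refine ⟨Finset.mem_filter.mpr ⟨Finset.mem_univ _, hxb⟩,
            Finset.mem_filter.mpr ⟨Finset.mem_univ _, ?_⟩⟩
          rw [hxb] at hbit
          cases hyb : Nat.testBit y i
          · rfl
          · exact absurd hyb.symm hbit
      · rintro ⟨p, hp, hcase⟩
        obtain ⟨i, _, rfl⟩ := Finset.mem_image.mp hp
        intro hxy
        subst hxy
        rcases hcase with ⟨h1, h2⟩ | ⟨h1, h2⟩ <;>
        · have b1 := (Finset.mem_filter.mp h1).2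
          have b2 := (Finset.mem_filter.mp h2).2
          rw [b1] at b2
          simp at b2
  have hcard : C.card ≤ k := le_trans (Finset.card_image_le) (by simp)
  have hcard_ge : k ≤ C.card := by
    have := lb_aux C hcover
    exact (Nat.clog_le_iff_le_pow (by norm_num)).mpr this
  have hmem : k ∈ {m | ∃ C, IsBicliqueCover (⊤ : SimpleGraph (Fin n)) C ∧ C.card = m} :=
    ⟨C, hcover, le_antisymm hcard hcard_ge⟩
  apply le_antisymm
  · exact Nat.sInf_le hmem
  · apply le_csInf ⟨k, hmem⟩
    rintro m ⟨D, hD, rfl⟩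
    exact (Nat.clog_le_iff_le_pow (by norm_num)).mpr (lb_aux D hD)
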